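/- Let f be a bi-homogeneous form of degree m on ℂⁿ and j a natural number with j ≤ m. Then max_{‖z‖=1} |((1/4)Δ)^j f(z, z̄)| ≤ (n m²)^j Λ(f), where Λ(f) := (Σ_{|α|=|β|=m} (α!β!/(m!)²)|c_{αβ}|²)^{1/2}. -/

import Mathlib

open Finset

private lemma AD_eq (n d : ℕ) :
    Finset.Nat.antidiagonalTuple n d = Finset.piAntidiag (Finset.univ : Finset (Fin n)) d := by
  ext γ
  simp [Finset.Nat.mem_antidiagonalTuple, Finset.mem_piAntidiag]

private lemma multinomial_cast {n d : ℕ} (γ : Fin n → ℕ) (h : ∑ i, γ i = d) :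
    (Nat.multinomial Finset.univ γ : ℝ) = (d.factorial : ℝ) / ∏ i, ((γ i).factorial : ℝ) := by
  have h2 := Nat.multinomial_spec (s := (Finset.univ : Finset (Fin n))) (f := γ)
  rw [h] at h2
  have hpos : (0:ℝ) < ∏ i, ((γ i).factorial : ℝ) := by positivity
  rw [eq_div_iff hpos.ne', mul_comm]
  exact_mod_cast congrArg (Nat.cast : ℕ → ℝ) h2

private lemma sum_multinomial_eq (n d : ℕ) (x : Fin n → ℝ) :
    ∑ γ ∈ Finset.Nat.antidiagonalTuple n d,
      ((d.factorial : ℝ) / ∏ i, ((γ i).factorial : ℝ)) * ∏ i, x i ^ γ i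
      = (∑ i, x i) ^ d := by
  rw [Finset.sum_pow_eq_sum_piAntidiag, ← AD_eq]
  refine Finset.sum_congr rfl fun γ hγ => ?_
  rw [Finset.Nat.mem_antidiagonalTuple] at hγ
  rw [multinomial_cast γ hγ]

open Finset

private lemma pointwise_bound (n d : ℕ) (a : (Fin n → ℕ) → (Fin n → ℕ) → ℂ)
    (z : Fin n → ℂ) (hz : ∑ i, ‖z i‖ ^ 2 = 1) :
    ‖∑ γ ∈ Finset.Nat.antidiagonalTuple n d, ∑ ρ ∈ Finset.Nat.antidiagonalTuple n d,
        a γ ρ * (∏ i, z i ^ γ i) * (∏ i, (starRingEnd ℂ) (z i) ^ ρ i)‖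
      ≤ Real.sqrt (∑ γ ∈ Finset.Nat.antidiagonalTuple n d,
          ∑ ρ ∈ Finset.Nat.antidiagonalTuple n d,
          ((∏ i, ((γ i).factorial : ℝ)) * (∏ i, ((ρ i).factorial : ℝ)) / (d.factorial : ℝ)^2)
            * ‖a γ ρ‖ ^ 2) := by
  classical
  set s := Finset.Nat.antidiagonalTuple n d with hs
  set F : (Fin n → ℕ) → ℝ := fun γ => ∏ i, ((γ i).factorial : ℝ) with hF
  have hFpos : ∀ γ, 0 < F γ := fun γ => by positivity
  set P : (Fin n → ℕ) → ℝ := fun γ => ∏ i, ‖z i‖ ^ γ i with hP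
  have hPnn : ∀ γ, 0 ≤ P γ := fun γ => by positivity
  set w : (Fin n → ℕ) × (Fin n → ℕ) → ℝ := fun p => F p.1 * F p.2 / (d.factorial : ℝ)^2
    with hw
  have hwpos : ∀ p, 0 < w p := fun p => by
    have := hFpos p.1; have := hFpos p.2; positivity
  -- triangle inequality
  have h1 : ‖∑ γ ∈ s, ∑ ρ ∈ s,
      a γ ρ * (∏ i, z i ^ γ i) * (∏ i, (starRingEnd ℂ) (z i) ^ ρ i)‖
      ≤ ∑ p ∈ s ×ˢ s, ‖a p.1 p.2‖ * P p.1 * P p.2 := by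
    rw [← Finset.sum_product']
    refine (norm_sum_le _ _).trans (le_of_eq (Finset.sum_congr rfl fun p _ => ?_))
    rw [norm_mul, norm_mul, norm_prod, norm_prod]
    congr 1
    · congr 1
      exact Finset.prod_congr rfl fun i _ => by rw [norm_pow]
    · exact Finset.prod_congr rfl fun i _ => by rw [norm_pow, RCLike.norm_conj]
  -- Cauchy-Schwarz
  have h2 : ∑ p ∈ s ×ˢ s, ‖a p.1 p.2‖ * P p.1 * P p.2
      ≤ Real.sqrt (∑ p ∈ s ×ˢ s, w p * ‖a p.1 p.2‖ ^ 2)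
        * Real.sqrt (∑ p ∈ s ×ˢ s, (P p.1 * P p.2) ^ 2 / w p) := by
    have hcs := Real.sum_mul_le_sqrt_mul_sqrt (s ×ˢ s)
      (fun p => Real.sqrt (w p) * ‖a p.1 p.2‖)
      (fun p => (P p.1 * P p.2) / Real.sqrt (w p))
    have he : ∀ p : (Fin n → ℕ) × (Fin n → ℕ),
        (Real.sqrt (w p) * ‖a p.1 p.2‖) * ((P p.1 * P p.2) / Real.sqrt (w p))
          = ‖a p.1 p.2‖ * P p.1 * P p.2 := by
      intro p
      have : Real.sqrt (w p) ≠ 0 := (Real.sqrt_pos.2 (hwpos p)).ne'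
      field_simp
    have he1 : ∀ p : (Fin n → ℕ) × (Fin n → ℕ),
        (Real.sqrt (w p) * ‖a p.1 p.2‖) ^ 2 = w p * ‖a p.1 p.2‖ ^ 2 := by
      intro p; rw [mul_pow, Real.sq_sqrt (hwpos p).le]
    have he2 : ∀ p : (Fin n → ℕ) × (Fin n → ℕ),
        ((P p.1 * P p.2) / Real.sqrt (w p)) ^ 2 = (P p.1 * P p.2) ^ 2 / w p := by
      intro p; rw [div_pow, Real.sq_sqrt (hwpos p).le]
    simp only [he, he1, he2] at hcs
    exact hcs
  -- second factor is 1
  have h3 : ∑ p ∈ s ×ˢ s, (P p.1 * P p.2) ^ 2 / w p = 1 := by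
    have hterm : ∀ p : (Fin n → ℕ) × (Fin n → ℕ),
        (P p.1 * P p.2) ^ 2 / w p
          = (((d.factorial : ℝ) / F p.1) * P p.1 ^ 2) *
            (((d.factorial : ℝ) / F p.2) * P p.2 ^ 2) := by
      intro p
      have h1 := (hFpos p.1).ne'
      have h2 := (hFpos p.2).ne'
      have h3 : ((d.factorial : ℝ)) ≠ 0 := by positivity
      field_simp [hw]
      have hw' : w p * (d.factorial : ℝ) ^ 2 = F p.1 * F p.2 := by
        rw [hw]; exact div_mul_cancel₀ _ (pow_ne_zero 2 h3)
      linear_combination (-(P p.1 ^ 2 * P p.2 ^ 2)) * hw'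
    simp only [hterm]
    rw [Finset.sum_product]; dsimp only; rw [← Finset.sum_mul_sum]
    have hone : ∑ γ ∈ s, ((d.factorial : ℝ) / F γ) * P γ ^ 2 = 1 := by
      have := sum_multinomial_eq n d (fun i => ‖z i‖ ^ 2)
      rw [hz, one_pow] at this
      rw [← this]
      refine Finset.sum_congr rfl fun γ _ => ?_
      congr 1
      rw [hP]
      rw [← Finset.prod_pow]
      exact Finset.prod_congr rfl fun i _ => by rw [← pow_mul, ← pow_mul, mul_comm (γ i) 2]
    rw [hone, one_mul]
  calc ‖∑ γ ∈ s, ∑ ρ ∈ s,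
      a γ ρ * (∏ i, z i ^ γ i) * (∏ i, (starRingEnd ℂ) (z i) ^ ρ i)‖
      ≤ ∑ p ∈ s ×ˢ s, ‖a p.1 p.2‖ * P p.1 * P p.2 := h1
    _ ≤ Real.sqrt (∑ p ∈ s ×ˢ s, w p * ‖a p.1 p.2‖ ^ 2)
        * Real.sqrt (∑ p ∈ s ×ˢ s, (P p.1 * P p.2) ^ 2 / w p) := h2
    _ = Real.sqrt (∑ γ ∈ s, ∑ ρ ∈ s,
          (F γ * F ρ / (d.factorial : ℝ)^2) * ‖a γ ρ‖ ^ 2) := by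
        rw [h3, Real.sqrt_one, mul_one, Finset.sum_product]
private lemma prod_factorial_succ {n : ℕ} (γ : Fin n → ℕ) (i : Fin n) :
    (∏ l, (((γ l + if l = i then 1 else 0)).factorial : ℝ))
      = ((γ i : ℝ) + 1) * ∏ l, ((γ l).factorial : ℝ) := by
  rw [← Finset.prod_erase_mul _ _ (Finset.mem_univ i),
      ← Finset.prod_erase_mul _ (fun l => ((γ l).factorial : ℝ)) (Finset.mem_univ i)]
  have hcongr : (∏ l ∈ Finset.univ.erase i, (((γ l + if l = i then 1 else 0)).factorial : ℝ))
      = ∏ l ∈ Finset.univ.erase i, ((γ l).factorial : ℝ) :=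
    Finset.prod_congr rfl fun l hl => by rw [if_neg (Finset.mem_erase.1 hl).1, Nat.add_zero]
  rw [hcongr, if_pos rfl, Nat.factorial_succ]
  push_cast
  ring

private lemma mem_AD_succ {n d : ℕ} {γ : Fin n → ℕ}
    (hγ : γ ∈ Finset.Nat.antidiagonalTuple n d) (i : Fin n) :
    (fun l => γ l + if l = i then 1 else 0) ∈ Finset.Nat.antidiagonalTuple n (d+1) := by
  rw [Finset.Nat.mem_antidiagonalTuple] at *
  rw [Finset.sum_add_distrib, hγ, Finset.sum_ite_eq' Finset.univ i (fun _ => 1)]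
  simp

private lemma step_bound (n m d k : ℕ) (cs : ℕ → (Fin n → ℕ) → (Fin n → ℕ) → ℂ)
    (hcsrec : ∀ k, ∀ γ ρ : Fin n → ℕ, cs (k + 1) γ ρ
        = ∑ i, (((γ i + 1) * (ρ i + 1) : ℕ) : ℂ)
            * cs k (fun l => γ l + if l = i then 1 else 0) (fun l => ρ l + if l = i then 1 else 0))
    (hd : d + 1 ≤ m) :
    ∑ γ ∈ Finset.Nat.antidiagonalTuple n d, ∑ ρ ∈ Finset.Nat.antidiagonalTuple n d,
        ((∏ i, ((γ i).factorial : ℝ)) * (∏ i, ((ρ i).factorial : ℝ))) * ‖cs (k+1) γ ρ‖^2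
      ≤ (n:ℝ)^2 * (m:ℝ)^2 *
        ∑ α ∈ Finset.Nat.antidiagonalTuple n (d+1), ∑ β ∈ Finset.Nat.antidiagonalTuple n (d+1),
          ((∏ i, ((α i).factorial : ℝ)) * (∏ i, ((β i).factorial : ℝ))) * ‖cs k α β‖^2 := by
  classical
  set s := Finset.Nat.antidiagonalTuple n d with hsdef
  set t := Finset.Nat.antidiagonalTuple n (d+1) with htdef
  set F : (Fin n → ℕ) → ℝ := fun γ => ∏ i, ((γ i).factorial : ℝ) with hF
  have hFpos : ∀ γ, 0 < F γ := fun γ => by positivity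
  set G : ((Fin n → ℕ) × (Fin n → ℕ)) → ℝ :=
    fun q => F q.1 * F q.2 * ‖cs k q.1 q.2‖^2 with hG
  have hGnn : ∀ q, 0 ≤ G q := fun q => by
    have := hFpos q.1; have := hFpos q.2; positivity
  -- per-entry Cauchy-Schwarz
  have hentry : ∀ γ ∈ s, ∀ ρ ∈ s, ‖cs (k+1) γ ρ‖^2
      ≤ ((n:ℝ) * (m:ℝ)^2) * ∑ i, (((γ i : ℝ) + 1) * ((ρ i : ℝ) + 1)) *
          ‖cs k (fun l => γ l + if l = i then 1 else 0) (fun l => ρ l + if l = i then 1 else 0)‖^2 := by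
    intro γ hγ ρ hρ
    set cc : Fin n → ℝ := fun i => ((γ i : ℝ) + 1) * ((ρ i : ℝ) + 1) with hcc
    have hccnn : ∀ i, 0 ≤ cc i := fun i => by positivity
    set N : Fin n → ℝ := fun i =>
      ‖cs k (fun l => γ l + if l = i then 1 else 0) (fun l => ρ l + if l = i then 1 else 0)‖ with hN
    have hNnn : ∀ i, 0 ≤ N i := fun i => norm_nonneg _
    have h1 : ‖cs (k+1) γ ρ‖ ≤ ∑ i, cc i * N i := by
      rw [hcsrec]
      refine (norm_sum_le _ _).trans (le_of_eq (Finset.sum_congr rfl fun i _ => ?_))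
      rw [norm_mul, Complex.norm_natCast]
      push_cast
      rfl
    have h2 : (∑ i, cc i * N i)^2 ≤ (∑ i, cc i) * (∑ i, cc i * N i ^ 2) := by
      have hcs := Finset.sum_mul_sq_le_sq_mul_sq Finset.univ
        (fun i => Real.sqrt (cc i)) (fun i => Real.sqrt (cc i) * N i)
      have e1 : ∀ i, Real.sqrt (cc i) * (Real.sqrt (cc i) * N i) = cc i * N i := by
        intro i; rw [← mul_assoc, Real.mul_self_sqrt (hccnn i)]
      have e2 : ∀ i, Real.sqrt (cc i) ^ 2 = cc i := fun i => Real.sq_sqrt (hccnn i)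
      have e3 : ∀ i, (Real.sqrt (cc i) * N i) ^ 2 = cc i * N i ^ 2 := by
        intro i; rw [mul_pow, Real.sq_sqrt (hccnn i)]
      simp only [e1, e2, e3] at hcs
      exact hcs
    have h3 : (∑ i, cc i) ≤ (n:ℝ) * (m:ℝ)^2 := by
      have hbound : ∀ i, cc i ≤ (m:ℝ)^2 := by
        intro i
        have hγi : γ i ≤ d := by
          rw [hsdef, Finset.Nat.mem_antidiagonalTuple] at hγ
          calc γ i ≤ ∑ l, γ l := Finset.single_le_sum (fun l _ => Nat.zero_le _) (Finset.mem_univ i)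
            _ = d := hγ
        have hρi : ρ i ≤ d := by
          rw [hsdef, Finset.Nat.mem_antidiagonalTuple] at hρ
          calc ρ i ≤ ∑ l, ρ l := Finset.single_le_sum (fun l _ => Nat.zero_le _) (Finset.mem_univ i)
            _ = d := hρ
        have h1 : ((γ i : ℝ) + 1) ≤ (m : ℝ) := by
          have : γ i + 1 ≤ m := le_trans (Nat.succ_le_succ hγi) hd
          exact_mod_cast this
        have h2 : ((ρ i : ℝ) + 1) ≤ (m : ℝ) := by
          have : ρ i + 1 ≤ m := le_trans (Nat.succ_le_succ hρi) hd
          exact_mod_cast this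
        calc cc i ≤ (m:ℝ) * (m:ℝ) :=
            mul_le_mul h1 h2 (by positivity) (by positivity)
          _ = (m:ℝ)^2 := (sq (m:ℝ)).symm
      calc (∑ i, cc i) ≤ ∑ _i : Fin n, (m:ℝ)^2 :=
          Finset.sum_le_sum fun i _ => hbound i
        _ = (n:ℝ) * (m:ℝ)^2 := by simp [mul_comm]
      -- done
    have hnn : 0 ≤ ∑ i, cc i * N i ^ 2 :=
      Finset.sum_nonneg fun i _ => mul_nonneg (hccnn i) (sq_nonneg _)
    calc ‖cs (k+1) γ ρ‖^2 ≤ (∑ i, cc i * N i)^2 := by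
          have hnn2 : (0:ℝ) ≤ ∑ i, cc i * N i :=
            Finset.sum_nonneg fun i _ => mul_nonneg (hccnn i) (hNnn i)
          exact pow_le_pow_left₀ (norm_nonneg _) h1 2
      _ ≤ (∑ i, cc i) * (∑ i, cc i * N i ^ 2) := h2
      _ ≤ ((n:ℝ) * (m:ℝ)^2) * (∑ i, cc i * N i ^ 2) :=
          mul_le_mul_of_nonneg_right h3 hnn
  -- sum up
  have hmain : ∑ p ∈ s ×ˢ s, F p.1 * F p.2 * ‖cs (k+1) p.1 p.2‖^2
      ≤ ((n:ℝ) * (m:ℝ)^2) * ∑ p ∈ s ×ˢ s, ∑ i,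
          G (fun l => p.1 l + if l = i then 1 else 0, fun l => p.2 l + if l = i then 1 else 0) := by
    rw [Finset.mul_sum]
    refine Finset.sum_le_sum fun p hp => ?_
    rw [Finset.mem_product] at hp
    have := hentry p.1 hp.1 p.2 hp.2
    have hFnn : 0 ≤ F p.1 * F p.2 := le_of_lt (mul_pos (hFpos p.1) (hFpos p.2))
    calc F p.1 * F p.2 * ‖cs (k+1) p.1 p.2‖^2
        ≤ F p.1 * F p.2 * (((n:ℝ) * (m:ℝ)^2) * ∑ i, (((p.1 i : ℝ) + 1) * ((p.2 i : ℝ) + 1)) *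
            ‖cs k (fun l => p.1 l + if l = i then 1 else 0)
              (fun l => p.2 l + if l = i then 1 else 0)‖^2) :=
          mul_le_mul_of_nonneg_left this hFnn
      _ = ((n:ℝ) * (m:ℝ)^2) * ∑ i,
          G (fun l => p.1 l + if l = i then 1 else 0, fun l => p.2 l + if l = i then 1 else 0) := by
          simp only [hG, hF, Finset.mul_sum]
          refine Finset.sum_congr rfl fun i _ => ?_
          rw [prod_factorial_succ p.1 i, prod_factorial_succ p.2 i]
          ring
  -- reindex
  have hre : ∀ i : Fin n, ∑ p ∈ s ×ˢ s,
      G (fun l => p.1 l + if l = i then 1 else 0, fun l => p.2 l + if l = i then 1 else 0)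
      ≤ ∑ q ∈ t ×ˢ t, G q := by
    intro i
    set φ : ((Fin n → ℕ) × (Fin n → ℕ)) → ((Fin n → ℕ) × (Fin n → ℕ)) :=
      fun p => (fun l => p.1 l + if l = i then 1 else 0, fun l => p.2 l + if l = i then 1 else 0)
      with hφ
    have hinj : ∀ p ∈ s ×ˢ s, ∀ q ∈ s ×ˢ s, φ p = φ q → p = q := by
      intro p _ q _ h
      rw [hφ] at h
      simp only [Prod.mk.injEq] at h
      have h1 : p.1 = q.1 := by
        funext l
        have := congrFun h.1 l
        omega
      have h2 : p.2 = q.2 := by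
        funext l
        have := congrFun h.2 l
        omega
      exact Prod.ext h1 h2
    have := Finset.sum_image (f := G) hinj
    rw [← this]
    refine Finset.sum_le_sum_of_subset_of_nonneg ?_ (fun q _ _ => hGnn q)
    intro q hq
    rw [Finset.mem_image] at hq
    obtain ⟨p, hp, rfl⟩ := hq
    rw [Finset.mem_product] at hp
    rw [Finset.mem_product]
    exact ⟨mem_AD_succ hp.1 i, mem_AD_succ hp.2 i⟩
  -- combine
  have hsum : ∑ p ∈ s ×ˢ s, ∑ i,
      G (fun l => p.1 l + if l = i then 1 else 0, fun l => p.2 l + if l = i then 1 else 0)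
      ≤ (n:ℝ) * ∑ q ∈ t ×ˢ t, G q := by
    rw [Finset.sum_comm]
    calc ∑ i, ∑ p ∈ s ×ˢ s,
        G (fun l => p.1 l + if l = i then 1 else 0, fun l => p.2 l + if l = i then 1 else 0)
        ≤ ∑ _i : Fin n, ∑ q ∈ t ×ˢ t, G q := Finset.sum_le_sum fun i _ => hre i
      _ = (n:ℝ) * ∑ q ∈ t ×ˢ t, G q := by
          rw [Finset.sum_const, Finset.card_univ, Fintype.card_fin, nsmul_eq_mul]
  have hGnn' : (0:ℝ) ≤ (n:ℝ) * (m:ℝ)^2 := by positivity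
  calc ∑ γ ∈ s, ∑ ρ ∈ s, (F γ * F ρ) * ‖cs (k+1) γ ρ‖^2
      = ∑ p ∈ s ×ˢ s, F p.1 * F p.2 * ‖cs (k+1) p.1 p.2‖^2 := by
        rw [Finset.sum_product]
    _ ≤ ((n:ℝ) * (m:ℝ)^2) * ∑ p ∈ s ×ˢ s, ∑ i,
          G (fun l => p.1 l + if l = i then 1 else 0, fun l => p.2 l + if l = i then 1 else 0) :=
        hmain
    _ ≤ ((n:ℝ) * (m:ℝ)^2) * ((n:ℝ) * ∑ q ∈ t ×ˢ t, G q) :=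
        mul_le_mul_of_nonneg_left hsum hGnn'
    _ = (n:ℝ)^2 * (m:ℝ)^2 * ∑ q ∈ t ×ˢ t, G q := by ring
    _ = (n:ℝ)^2 * (m:ℝ)^2 * ∑ α ∈ t, ∑ β ∈ t, (F α * F β) * ‖cs k α β‖^2 := by
        rw [Finset.sum_product]
theorem iterated_laplacian_sup_bound (n m : ℕ)
    (c : (Fin n → ℕ) → (Fin n → ℕ) → ℂ)
    (hherm : ∀ α ∈ Finset.Nat.antidiagonalTuple n m, ∀ β ∈ Finset.Nat.antidiagonalTuple n m,
      (starRingEnd ℂ) (c α β) = c β α)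
    (j : ℕ) (hj : j ≤ m)
    (cs : ℕ → (Fin n → ℕ) → (Fin n → ℕ) → ℂ)
    (hcs0 : cs 0 = c)
    (hcsrec : ∀ k, ∀ γ ρ : Fin n → ℕ, cs (k + 1) γ ρ
        = ∑ i, (((γ i + 1) * (ρ i + 1) : ℕ) : ℂ)
            * cs k (fun l => γ l + if l = i then 1 else 0) (fun l => ρ l + if l = i then 1 else 0))
    (z : Fin n → ℂ) (hz : ∑ i, ‖z i‖ ^ 2 = 1) :
    ‖∑ γ ∈ Finset.Nat.antidiagonalTuple n (m - j), ∑ ρ ∈ Finset.Nat.antidiagonalTuple n (m - j),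
        cs j γ ρ * (∏ i, z i ^ γ i) * (∏ i, (starRingEnd ℂ) (z i) ^ ρ i)‖
      ≤ ((n : ℝ) * (m : ℝ) ^ 2) ^ j *
        Real.sqrt (∑ α ∈ Finset.Nat.antidiagonalTuple n m,
          ∑ β ∈ Finset.Nat.antidiagonalTuple n m,
            ((∏ i, (Nat.factorial (α i) : ℝ)) * (∏ i, (Nat.factorial (β i) : ℝ))
                / (Nat.factorial m : ℝ) ^ 2) * ‖c α β‖ ^ 2) := by
  classical
  have hfacpos : ∀ q : ℕ, (0:ℝ) < (Nat.factorial q : ℝ) := fun q => by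
    exact_mod_cast Nat.factorial_pos q
  set Tm : ℝ := ∑ α ∈ Finset.Nat.antidiagonalTuple n m, ∑ β ∈ Finset.Nat.antidiagonalTuple n m,
      ((∏ i, ((α i).factorial : ℝ)) * (∏ i, ((β i).factorial : ℝ))) * ‖c α β‖^2 with hTm
  have hTm_nn : 0 ≤ Tm := by
    refine Finset.sum_nonneg fun α _ => Finset.sum_nonneg fun β _ => ?_
    positivity
  have key : ∀ k, k ≤ m →
      ∑ γ ∈ Finset.Nat.antidiagonalTuple n (m-k), ∑ ρ ∈ Finset.Nat.antidiagonalTuple n (m-k),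
        ((∏ i, ((γ i).factorial : ℝ)) * (∏ i, ((ρ i).factorial : ℝ))) * ‖cs k γ ρ‖^2
      ≤ ((n:ℝ)^2 * (m:ℝ)^4)^k
          * (((Nat.factorial (m-k) : ℝ))^2 / ((Nat.factorial m : ℝ))^2) * Tm := by
    intro k
    induction k with
    | zero =>
      intro _
      rw [hcs0, Nat.sub_zero, pow_zero, one_mul, div_self (by positivity), one_mul, hTm]
    | succ k ih =>
      intro hk1
      have hk : k ≤ m := Nat.le_of_succ_le hk1
      have hd : (m - (k+1)) + 1 = m - k := by omega
      have hfac : ((Nat.factorial (m-k) : ℝ))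
          = (((m-k : ℕ) : ℝ)) * (Nat.factorial (m-(k+1)) : ℝ) := by
        rw [← hd, Nat.factorial_succ]
        push_cast [hd]
        ring
      have h1 : ((m-k:ℕ):ℝ) ≤ (m:ℝ) := by exact_mod_cast Nat.sub_le m k
      have h2 : (0:ℝ) ≤ ((m-k:ℕ):ℝ) := by positivity
      have hsq : ((m-k:ℕ):ℝ)^2 ≤ (m:ℝ)^2 := by
        exact pow_le_pow_left₀ h2 h1 2
      have hstep := step_bound n m (m-(k+1)) k cs hcsrec (by omega)
      rw [hd] at hstep
      have hC : (0:ℝ) ≤ (n:ℝ)^2*(m:ℝ)^2*((n:ℝ)^2*(m:ℝ)^4)^k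
          * ((Nat.factorial (m-(k+1)):ℝ))^2/((Nat.factorial m:ℝ))^2 * Tm := by
        have := hfacpos (m-(k+1)); have := hfacpos m
        positivity
      calc ∑ γ ∈ Finset.Nat.antidiagonalTuple n (m-(k+1)),
            ∑ ρ ∈ Finset.Nat.antidiagonalTuple n (m-(k+1)),
            ((∏ i, ((γ i).factorial : ℝ)) * (∏ i, ((ρ i).factorial : ℝ))) * ‖cs (k+1) γ ρ‖^2
          ≤ (n:ℝ)^2 * (m:ℝ)^2 *
            ∑ α ∈ Finset.Nat.antidiagonalTuple n (m-k), ∑ β ∈ Finset.Nat.antidiagonalTuple n (m-k),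
              ((∏ i, ((α i).factorial : ℝ)) * (∏ i, ((β i).factorial : ℝ))) * ‖cs k α β‖^2 := hstep
        _ ≤ (n:ℝ)^2 * (m:ℝ)^2 * (((n:ℝ)^2 * (m:ℝ)^4)^k
              * (((Nat.factorial (m-k) : ℝ))^2 / ((Nat.factorial m : ℝ))^2) * Tm) :=
            mul_le_mul_of_nonneg_left (ih hk) (by positivity)
        _ = ((m-k:ℕ):ℝ)^2 * ((n:ℝ)^2*(m:ℝ)^2*((n:ℝ)^2*(m:ℝ)^4)^k
              * ((Nat.factorial (m-(k+1)):ℝ))^2/((Nat.factorial m:ℝ))^2 * Tm) := by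
            rw [hfac]; ring
        _ ≤ (m:ℝ)^2 * ((n:ℝ)^2*(m:ℝ)^2*((n:ℝ)^2*(m:ℝ)^4)^k
              * ((Nat.factorial (m-(k+1)):ℝ))^2/((Nat.factorial m:ℝ))^2 * Tm) :=
            mul_le_mul_of_nonneg_right hsq hC
        _ = ((n:ℝ)^2 * (m:ℝ)^4)^(k+1)
              * (((Nat.factorial (m-(k+1)) : ℝ))^2 / ((Nat.factorial m : ℝ))^2) * Tm := by
            rw [pow_succ]; ring
  -- pointwise bound
  have hpb := pointwise_bound n (m-j) (cs j) z hz
  have hq := hfacpos (m-j)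
  have hqm := hfacpos m
  have hdiv : ∑ γ ∈ Finset.Nat.antidiagonalTuple n (m-j),
      ∑ ρ ∈ Finset.Nat.antidiagonalTuple n (m-j),
      ((∏ i, ((γ i).factorial : ℝ)) * (∏ i, ((ρ i).factorial : ℝ))
          / ((Nat.factorial (m-j) : ℝ))^2) * ‖cs j γ ρ‖^2
      = (∑ γ ∈ Finset.Nat.antidiagonalTuple n (m-j),
          ∑ ρ ∈ Finset.Nat.antidiagonalTuple n (m-j),
          ((∏ i, ((γ i).factorial : ℝ)) * (∏ i, ((ρ i).factorial : ℝ))) * ‖cs j γ ρ‖^2)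
        / ((Nat.factorial (m-j) : ℝ))^2 := by
    rw [Finset.sum_div]
    refine Finset.sum_congr rfl fun γ _ => ?_
    rw [Finset.sum_div]
    refine Finset.sum_congr rfl fun ρ _ => ?_
    ring
  have hdivm : ∑ α ∈ Finset.Nat.antidiagonalTuple n m, ∑ β ∈ Finset.Nat.antidiagonalTuple n m,
      ((∏ i, ((α i).factorial : ℝ)) * (∏ i, ((β i).factorial : ℝ))
          / ((Nat.factorial m : ℝ))^2) * ‖c α β‖^2
      = Tm / ((Nat.factorial m : ℝ))^2 := by
    rw [hTm, Finset.sum_div]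
    refine Finset.sum_congr rfl fun α _ => ?_
    rw [Finset.sum_div]
    refine Finset.sum_congr rfl fun β _ => ?_
    ring
  have hbound : (∑ γ ∈ Finset.Nat.antidiagonalTuple n (m-j),
        ∑ ρ ∈ Finset.Nat.antidiagonalTuple n (m-j),
        ((∏ i, ((γ i).factorial : ℝ)) * (∏ i, ((ρ i).factorial : ℝ))) * ‖cs j γ ρ‖^2)
      / ((Nat.factorial (m-j) : ℝ))^2
      ≤ ((n:ℝ)^2 * (m:ℝ)^4)^j * (Tm / ((Nat.factorial m : ℝ))^2) := by
    have hkey := key j hj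
    calc (∑ γ ∈ Finset.Nat.antidiagonalTuple n (m-j),
          ∑ ρ ∈ Finset.Nat.antidiagonalTuple n (m-j),
          ((∏ i, ((γ i).factorial : ℝ)) * (∏ i, ((ρ i).factorial : ℝ))) * ‖cs j γ ρ‖^2)
        / ((Nat.factorial (m-j) : ℝ))^2
        ≤ (((n:ℝ)^2 * (m:ℝ)^4)^j
            * (((Nat.factorial (m-j) : ℝ))^2 / ((Nat.factorial m : ℝ))^2) * Tm)
          / ((Nat.factorial (m-j) : ℝ))^2 := by gcongr
      _ = ((n:ℝ)^2 * (m:ℝ)^4)^j * (Tm / ((Nat.factorial m : ℝ))^2) := by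
          field_simp
  have hpow : ((n:ℝ)^2 * (m:ℝ)^4)^j = (((n:ℝ) * (m:ℝ)^2)^j)^2 := by ring
  calc ‖∑ γ ∈ Finset.Nat.antidiagonalTuple n (m - j), ∑ ρ ∈ Finset.Nat.antidiagonalTuple n (m - j),
        cs j γ ρ * (∏ i, z i ^ γ i) * (∏ i, (starRingEnd ℂ) (z i) ^ ρ i)‖
      ≤ Real.sqrt (∑ γ ∈ Finset.Nat.antidiagonalTuple n (m-j),
          ∑ ρ ∈ Finset.Nat.antidiagonalTuple n (m-j),
          ((∏ i, ((γ i).factorial : ℝ)) * (∏ i, ((ρ i).factorial : ℝ))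
              / ((Nat.factorial (m-j) : ℝ))^2) * ‖cs j γ ρ‖^2) := hpb
    _ ≤ Real.sqrt (((n:ℝ)^2 * (m:ℝ)^4)^j * (Tm / ((Nat.factorial m : ℝ))^2)) := by
        rw [hdiv]
        exact Real.sqrt_le_sqrt hbound
    _ = ((n : ℝ) * (m : ℝ) ^ 2) ^ j * Real.sqrt (Tm / ((Nat.factorial m : ℝ))^2) := by
        rw [hpow, Real.sqrt_mul (sq_nonneg _), Real.sqrt_sq (by positivity)]
    _ = ((n : ℝ) * (m : ℝ) ^ 2) ^ j *
        Real.sqrt (∑ α ∈ Finset.Nat.antidiagonalTuple n m,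
          ∑ β ∈ Finset.Nat.antidiagonalTuple n m,
            ((∏ i, (Nat.factorial (α i) : ℝ)) * (∏ i, (Nat.factorial (β i) : ℝ))
                / (Nat.factorial m : ℝ) ^ 2) * ‖c α β‖ ^ 2) := by
        rw [hdivm]
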